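/- Let V be a real inner product space and let α₁, α₂, ᾱ₃, α₄, β₁, β₂, β₃, β₄ ∈ V satisfy: ⟪β₂,β₂⟫ = ⟪α₂,α₂⟫ = ⟪β₃,β₃⟫ = ⟪ᾱ₃,ᾱ₃⟫ = 2; ⟪β₂,α₂⟫ = −1, ⟪α₂,β₃⟫ = −1, ⟪β₃,ᾱ₃⟫ = −1, ⟪β₂,β₃⟫ = ⟪β₂,ᾱ₃⟫ = ⟪α₂,ᾱ₃⟫ = 0; ⟪ᾱ₃,β₁⟫ + ⟪α₂,β₁⟫ = 0 and ⟪β₂,β₁⟫ = ⟪β₃,β₁⟫ = 0; and each of β₂, α₂, β₃, ᾱ₃ is orthogonal to α₁, to α₄, and to β₄ (the relevant Gram relations of the Carter diagram E₈(a₁)). Set α₃ := −(ᾱ₃ + β₃ + α₂ + β₂). Then ⟪α₃,α₃⟫ = 2, ⟪α₃,β₂⟫ = −1, and α₃ is orthogonal to each of α₁, α₂, α₄, β₁, β₃, β₄ (the Gram relations of the Dynkin diagram E₈). -/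
import Mathlib


open scoped RealInnerProductSpace


theorem stmt8 {V : Type*} [NormedAddCommGroup V] [InnerProductSpace ℝ V]
    (α₁ α₂ αb₃ α₄ β₁ β₂ β₃ β₄ : V)
    (h0 : ⟪β₂, β₂⟫ = 2)
    (h1 : ⟪α₂, α₂⟫ = 2)
    (h2 : ⟪β₃, β₃⟫ = 2)
    (h3 : ⟪αb₃, αb₃⟫ = 2)
    (h4 : ⟪β₂, α₂⟫ = -1)
    (h5 : ⟪α₂, β₃⟫ = -1)
    (h6 : ⟪β₃, αb₃⟫ = -1)
    (h7 : ⟪β₂, β₃⟫ = 0)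
    (h8 : ⟪β₂, αb₃⟫ = 0)
    (h9 : ⟪α₂, αb₃⟫ = 0)
    (h10 : ⟪αb₃, β₁⟫ + ⟪α₂, β₁⟫ = 0)
    (h11 : ⟪β₂, β₁⟫ = 0)
    (h12 : ⟪β₃, β₁⟫ = 0)
    (h13 : ⟪β₂, α₁⟫ = 0)
    (h14 : ⟪β₂, α₄⟫ = 0)
    (h15 : ⟪β₂, β₄⟫ = 0)
    (h16 : ⟪α₂, α₁⟫ = 0)
    (h17 : ⟪α₂, α₄⟫ = 0)
    (h18 : ⟪α₂, β₄⟫ = 0)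
    (h19 : ⟪β₃, α₁⟫ = 0)
    (h20 : ⟪β₃, α₄⟫ = 0)
    (h21 : ⟪β₃, β₄⟫ = 0)
    (h22 : ⟪αb₃, α₁⟫ = 0)
    (h23 : ⟪αb₃, α₄⟫ = 0)
    (h24 : ⟪αb₃, β₄⟫ = 0)
    (α₃ : V) (hdef : α₃ = -(αb₃ + β₃ + α₂ + β₂)) :
    ⟪α₃, α₃⟫ = 2 ∧
    ⟪α₃, β₂⟫ = -1 ∧
    ⟪α₃, α₁⟫ = 0 ∧
    ⟪α₃, α₂⟫ = 0 ∧
    ⟪α₃, α₄⟫ = 0 ∧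
    ⟪α₃, β₁⟫ = 0 ∧
    ⟪α₃, β₃⟫ = 0 ∧
    ⟪α₃, β₄⟫ = 0 := by
  subst hdef
  have c1 : ⟪β₃, β₂⟫ = (0:ℝ) := by rw [real_inner_comm]; exact h7
  have c2 : ⟪αb₃, β₂⟫ = (0:ℝ) := by rw [real_inner_comm]; exact h8
  have c3 : ⟪αb₃, α₂⟫ = (0:ℝ) := by rw [real_inner_comm]; exact h9
  have c4 : ⟪α₂, β₂⟫ = (-1:ℝ) := by rw [real_inner_comm]; exact h4
  have c5 : ⟪β₃, α₂⟫ = (-1:ℝ) := by rw [real_inner_comm]; exact h5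
  have c6 : ⟪αb₃, β₃⟫ = (-1:ℝ) := by rw [real_inner_comm]; exact h6
  refine ⟨?_, ?_, ?_, ?_, ?_, ?_, ?_, ?_⟩ <;>
    simp only [inner_neg_left, inner_add_left, inner_add_right, inner_neg_right,
      h0, h1, h2, h3, h4, h5, h6, h7, h8, h9, h11, h12, h13, h14, h15, h16, h17, h18,
      h19, h20, h21, h22, h23, h24, c1, c2, c3, c4, c5, c6] <;> linarith
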